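/- For an FAW attacker who uses τ₀ = argmax_τ R_a(τ, 0) (the BWH-optimal infiltration fraction), her FAW reward satisfies R_a(τ₀, c) = max_τ R_a(τ,0) + c·τ₀α·((1-α-β)/(1-τ₀α))·(τ₀α/(β+τ₀α)), which is at least the maximal BWH reward for any c ≥ 0. -/
import Mathlib

theorem faw_reward_at_bwh_optimum (α β τ₀ c : ℝ)
    (hα : 0 < α) (hβ : 0 < β) (hαβ : α + β < 1)
    (hτ₀ : τ₀ ∈ Set.Ico (0 : ℝ) 1) (hc : 0 ≤ c) (hc1 : c ≤ 1)
    -- τ₀ is the argmax of the BWH reward R_a(τ, 0) on [0,1)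
    (hargmax : ∀ τ ∈ Set.Ico (0 : ℝ) 1,
      (1 - τ) * α / (1 - τ * α) + (β / (1 - τ * α)) * (τ * α / (β + τ * α))
      ≤ (1 - τ₀) * α / (1 - τ₀ * α) + (β / (1 - τ₀ * α)) * (τ₀ * α / (β + τ₀ * α))) :
    ((1 - τ₀) * α / (1 - τ₀ * α)
      + (β / (1 - τ₀ * α) + c * (τ₀ * α) * (1 - α - β) / (1 - τ₀ * α)) * (τ₀ * α / (β + τ₀ * α))
      = ((1 - τ₀) * α / (1 - τ₀ * α) + (β / (1 - τ₀ * α)) * (τ₀ * α / (β + τ₀ * α)))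
        + c * (τ₀ * α) * ((1 - α - β) / (1 - τ₀ * α)) * (τ₀ * α / (β + τ₀ * α)))
    ∧ ((1 - τ₀) * α / (1 - τ₀ * α) + (β / (1 - τ₀ * α)) * (τ₀ * α / (β + τ₀ * α))
      ≤ (1 - τ₀) * α / (1 - τ₀ * α)
        + (β / (1 - τ₀ * α) + c * (τ₀ * α) * (1 - α - β) / (1 - τ₀ * α))
          * (τ₀ * α / (β + τ₀ * α))) := by
  obtain ⟨h0, h1⟩ := hτ₀
  have heq : (1 - τ₀) * α / (1 - τ₀ * α)
      + (β / (1 - τ₀ * α) + c * (τ₀ * α) * (1 - α - β) / (1 - τ₀ * α)) * (τ₀ * α / (β + τ₀ * α))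
      = ((1 - τ₀) * α / (1 - τ₀ * α) + (β / (1 - τ₀ * α)) * (τ₀ * α / (β + τ₀ * α)))
        + c * (τ₀ * α) * ((1 - α - β) / (1 - τ₀ * α)) * (τ₀ * α / (β + τ₀ * α)) := by
    ring
  refine ⟨heq, ?_⟩
  rw [heq]
  have h2 : 0 ≤ c * (τ₀ * α) * ((1 - α - β) / (1 - τ₀ * α)) * (τ₀ * α / (β + τ₀ * α)) := by
    have hτα : 0 ≤ τ₀ * α := mul_nonneg h0 hα.le
    have hden : 0 < 1 - τ₀ * α := by nlinarith
    have h3 : (0:ℝ) ≤ 1 - α - β := by linarith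
    have h4 : 0 < β + τ₀ * α := by linarith
    exact mul_nonneg (mul_nonneg (mul_nonneg hc hτα) (div_nonneg h3 hden.le)) (div_nonneg hτα h4.le)
  linarith
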